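/- Let 𝔉 be a union-closed family of subsets of X = {a₁,…,aₙ}, let w = a₁a₂…aₙ, and let g ∈ 𝔉. Then the orbit { φ_{wθ}(g) : θ a permutation of X } equals the set max(Fib(g)) of maximal elements of the fiber of g. -/

import Mathlib

open Finset

variable {α : Type*} [DecidableEq α]

/-- A family is union-closed if it is closed under pairwise unions. -/
def UnionClosed (F : Finset (Finset α)) : Prop := ∀ f ∈ F, ∀ g ∈ F, f ∪ g ∈ F

/-- One rising step: φ_{S,a}(z) = z ∪ {a} if z ∪ {a} ∉ S, and z otherwise. -/
def riseStep (S : Finset (Finset α)) (a : α) (z : Finset α) : Finset α :=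
  if insert a z ∈ S then z else insert a z

/-- Iterated rising function along a word (list of letters): at each step the
current family is replaced by its image and the next letter is risen. -/
def riseWord (S : Finset (Finset α)) : List α → Finset α → Finset α
  | [], z => z
  | a :: u, z => riseWord (S.image (riseStep S a)) u (riseStep S a z)

/-- The section of a family along (a prefix of) a word. -/
def riseSections (S : Finset (Finset α)) : List α → Finset (Finset α)
  | [] => S
  | a :: u => riseSections (S.image (riseStep S a)) u

/-- The set of minimal elements of a family (under inclusion). -/
def minsF (F : Finset (Finset α)) : Finset (Finset α) :=
  F.filter fun h => ∀ g ∈ F, g ⊆ h → g = h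

/-- The operator z ↦ z* = ⋃ { h ∈ F : h ⊆ z }. -/
def starOp (F : Finset (Finset α)) (z : Finset α) : Finset α :=
  (F.filter fun f => f ⊆ z).sup id

/-- The fiber Fib(g) = { h ∈ min(F)↑ : h* = g }. -/
def FibS (F : Finset (Finset α)) (g : Finset α) : Set (Finset α) :=
  {h | (∃ m ∈ minsF F, m ⊆ h) ∧ starOp F h = g}

section AuxLemmas

lemma subset_riseStep (S : Finset (Finset α)) (a : α) (z : Finset α) :
    z ⊆ riseStep S a z := by
  unfold riseStep; split
  · exact subset_rfl
  · exact subset_insert _ _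

lemma riseStep_subset (S : Finset (Finset α)) (a : α) (z : Finset α) :
    riseStep S a z ⊆ insert a z := by
  unfold riseStep; split
  · exact subset_insert _ _
  · exact subset_rfl

lemma unionClosed_image {S : Finset (Finset α)} (hS : UnionClosed S) (a : α) :
    UnionClosed (S.image (riseStep S a)) := by
  intro f' hf' g' hg'
  obtain ⟨f, hf, rfl⟩ := mem_image.1 hf'
  obtain ⟨g, hg, rfl⟩ := mem_image.1 hg'
  have hfg : f ∪ g ∈ S := hS f hf g hg
  by_cases h1 : insert a f ∈ S
  · by_cases h2 : insert a g ∈ S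
    · -- both stay
      have : riseStep S a f ∪ riseStep S a g = f ∪ g := by
        simp [riseStep, h1, h2]
      rw [this]
      have hins : insert a (f ∪ g) ∈ S := by
        have := hS _ h1 _ h2
        simpa [insert_union, union_insert] using this
      refine mem_image.2 ⟨f ∪ g, hfg, ?_⟩
      simp [riseStep, hins]
    · -- g rises
      have : riseStep S a f ∪ riseStep S a g = insert a (f ∪ g) := by
        simp only [riseStep, h1, h2, if_pos, if_neg, if_true, if_false]
        simp [union_insert]
      rw [this]
      by_cases h3 : insert a (f ∪ g) ∈ S
      · refine mem_image.2 ⟨insert a (f ∪ g), h3, ?_⟩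
        simp [riseStep, insert_idem, h3]
      · refine mem_image.2 ⟨f ∪ g, hfg, ?_⟩
        simp [riseStep, h3]
  · -- f rises
    have : riseStep S a f ∪ riseStep S a g = insert a (f ∪ g) := by
      have hg' : g ⊆ riseStep S a g := subset_riseStep _ _ _
      have hg'' : riseStep S a g ⊆ insert a g := riseStep_subset _ _ _
      simp only [riseStep, h1, if_neg]
      apply Subset.antisymm
      · intro x hx
        rcases mem_union.1 hx with hx | hx
        · rcases mem_insert.1 hx with rfl | hx
          · exact mem_insert_self _ _
          · exact mem_insert_of_mem (mem_union_left _ hx)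
        · rcases mem_insert.1 (hg'' hx) with rfl | hx
          · exact mem_insert_self _ _
          · exact mem_insert_of_mem (mem_union_right _ hx)
      · intro x hx
        rcases mem_insert.1 hx with rfl | hx
        · exact mem_union_left _ (mem_insert_self _ _)
        · rcases mem_union.1 hx with hx | hx
          · exact mem_union_left _ (mem_insert_of_mem hx)
          · exact mem_union_right _ (hg' hx)
    rw [this]
    by_cases h3 : insert a (f ∪ g) ∈ S
    · refine mem_image.2 ⟨insert a (f ∪ g), h3, ?_⟩
      simp [riseStep, insert_idem, h3]
    · refine mem_image.2 ⟨f ∪ g, hfg, ?_⟩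
      simp [riseStep, h3]

lemma subset_riseWord (u : List α) : ∀ (S : Finset (Finset α)) (z : Finset α),
    z ⊆ riseWord S u z := by
  induction u with
  | nil => intro S z; exact subset_rfl
  | cons a u ih =>
    intro S z
    exact (subset_riseStep S a z).trans (ih _ _)

lemma riseWord_subset (u : List α) : ∀ (S : Finset (Finset α)) (z : Finset α),
    ∀ x ∈ riseWord S u z, x ∈ z ∨ x ∈ u := by
  induction u with
  | nil => intro S z x hx; exact Or.inl hx
  | cons a u ih =>
    intro S z x hx
    rcases ih _ _ x hx with hx | hx
    · rcases mem_insert.1 (riseStep_subset S a z hx) with rfl | hx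
      · exact Or.inr (List.mem_cons_self)
      · exact Or.inl hx
    · exact Or.inr (List.mem_cons_of_mem _ hx)

lemma riseWord_mem_sections (u : List α) : ∀ (S : Finset (Finset α)) (z : Finset α),
    z ∈ S → riseWord S u z ∈ riseSections S u := by
  induction u with
  | nil => intro S z hz; exact hz
  | cons a u ih =>
    intro S z hz
    exact ih _ _ (mem_image_of_mem _ hz)

lemma unionClosed_sections (u : List α) : ∀ (S : Finset (Finset α)), UnionClosed S →
    UnionClosed (riseSections S u) := by
  induction u with
  | nil => intro S hS; exact hS
  | cons a u ih => intro S hS; exact ih _ (unionClosed_image hS a)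

lemma riseWord_append (u v : List α) : ∀ (S : Finset (Finset α)) (z : Finset α),
    riseWord S (u ++ v) z = riseWord (riseSections S u) v (riseWord S u z) := by
  induction u with
  | nil => intro S z; rfl
  | cons a u ih => intro S z; exact ih _ _

lemma lemA (u : List α) : ∀ (S : Finset (Finset α)), UnionClosed S →
    ∀ z ∈ S, ∀ f ∈ S, f ⊆ riseWord S u z → f ⊆ z := by
  induction u with
  | nil => intro S _ z _ f _ h; exact h
  | cons a u ih =>
    intro S hS z hz f hf hfη
    have hS' := unionClosed_image hS a
    have hz' : riseStep S a z ∈ S.image (riseStep S a) := mem_image_of_mem _ hz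
    have hrw : riseWord S (a :: u) z = riseWord (S.image (riseStep S a)) u (riseStep S a z) :=
      rfl
    have hzη : riseStep S a z ⊆ riseWord S (a :: u) z := by
      rw [hrw]; exact subset_riseWord u _ _
    have hk : f ∪ z ∈ S := hS f hf z hz
    by_cases hza : insert a z ∈ S
    · -- stay case
      have hstep : riseStep S a z = z := if_pos hza
      have hik : insert a (f ∪ z) ∈ S := by
        have := hS f hf _ hza
        simpa [union_insert] using this
      have hkS' : f ∪ z ∈ S.image (riseStep S a) :=
        mem_image.2 ⟨f ∪ z, hk, if_pos hik⟩
      have hkη : f ∪ z ⊆ riseWord (S.image (riseStep S a)) u (riseStep S a z) := by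
        rw [← hrw]
        exact union_subset hfη ((subset_riseStep S a z).trans hzη)
      have := ih _ hS' _ hz' _ hkS' hkη
      rw [hstep] at this
      exact subset_union_left.trans this
    · -- rise case
      have hstep : riseStep S a z = insert a z := if_neg hza
      have hkS' : riseStep S a (f ∪ z) ∈ S.image (riseStep S a) := mem_image_of_mem _ hk
      have hkη : riseStep S a (f ∪ z) ⊆ riseWord (S.image (riseStep S a)) u (riseStep S a z) := by
        rw [← hrw]
        refine (riseStep_subset _ _ _).trans ?_
        have : insert a (f ∪ z) = f ∪ insert a z := by
          simp [union_insert]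
        rw [this]
        have hzη' : insert a z ⊆ riseWord S (a :: u) z := by rw [← hstep]; exact hzη
        exact union_subset hfη hzη'
      have h1 := ih _ hS' _ hz' _ hkS' hkη
      rw [hstep] at h1
      have h2 : f ∪ z ⊆ insert a z := (subset_riseStep S a _).trans h1
      have haf : a ∉ f := by
        intro haf
        apply hza
        have : f ∪ z = insert a z := by
          apply Subset.antisymm h2
          exact insert_subset (mem_union_left _ haf) subset_union_right
        rw [← this]; exact hk
      intro x hx
      rcases mem_insert.1 (h2 (mem_union_left _ hx)) with rfl | hxz
      · exact absurd hx haf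
      · exact hxz

lemma lemB (u : List α) : ∀ (S : Finset (Finset α)) (z : Finset α), z ∈ S →
    ∀ x ∈ u, x ∉ riseWord S u z →
    ∃ f ∈ S, x ∈ f ∧ f ⊆ insert x (riseWord S u z) := by
  induction u with
  | nil => intro S z _ x hx; exact absurd hx (List.not_mem_nil)
  | cons a u ih =>
    intro S z hz x hxu hxη
    have hrw : riseWord S (a :: u) z = riseWord (S.image (riseStep S a)) u (riseStep S a z) :=
      rfl
    have hzη : riseStep S a z ⊆ riseWord S (a :: u) z := by
      rw [hrw]; exact subset_riseWord u _ _
    by_cases hxa : x = a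
    · subst hxa
      have hza : insert x z ∈ S := by
        by_contra h
        have : riseStep S x z = insert x z := if_neg h
        exact hxη (hzη (this ▸ mem_insert_self x z))
      refine ⟨insert x z, hza, mem_insert_self _ _, ?_⟩
      exact insert_subset_insert _ ((subset_riseStep S x z).trans hzη)
    · have hxu' : x ∈ u := by
        rcases List.mem_cons.1 hxu with h | h
        · exact absurd h hxa
        · exact h
      rw [hrw] at hxη ⊢
      obtain ⟨f', hf', hxf', hf'sub⟩ := ih _ _ (mem_image_of_mem _ hz) x hxu' hxη
      obtain ⟨f, hf, hff'⟩ := mem_image.1 hf'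
      refine ⟨f, hf, ?_, ?_⟩
      · have : x ∈ insert a f := (hff' ▸ riseStep_subset S a f) hxf'
        rcases mem_insert.1 this with h | h
        · exact absurd h hxa
        · exact h
      · exact (hff' ▸ subset_riseStep S a f).trans hf'sub

lemma exists_mins (F : Finset (Finset α)) : ∀ (n : ℕ) (g : Finset α), g.card ≤ n → g ∈ F →
    ∃ m ∈ minsF F, m ⊆ g := by
  intro n
  induction n with
  | zero =>
    intro g hc hgF
    refine ⟨g, ?_, subset_rfl⟩
    refine mem_filter.2 ⟨hgF, fun h hhF hhg => ?_⟩
    have : g = ∅ := card_eq_zero.1 (Nat.le_zero.1 hc)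
    subst this
    exact subset_empty.1 hhg
  | succ n ih =>
    intro g hc hgF
    by_cases hmin : ∀ h ∈ F, h ⊆ g → h = g
    · exact ⟨g, mem_filter.2 ⟨hgF, hmin⟩, subset_rfl⟩
    · push_neg at hmin
      obtain ⟨h, hhF, hhg, hne⟩ := hmin
      have hlt : h < g := lt_of_le_of_ne hhg hne
      have : h.card ≤ n := Nat.lt_succ_iff.1 (lt_of_lt_of_le (card_lt_card hlt) hc)
      obtain ⟨m, hm, hmh⟩ := ih h this hhF
      exact ⟨m, hm, hmh.trans hhg⟩

lemma lemTrack (u : List α) : ∀ (S : Finset (Finset α)), ∀ f ∈ S,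
    ∃ f' ∈ riseSections S u, f ⊆ f' ∧ ∀ x ∈ f', x ∈ f ∨ x ∈ u := by
  induction u with
  | nil => intro S f hf; exact ⟨f, hf, subset_rfl, fun x hx => Or.inl hx⟩
  | cons a u ih =>
    intro S f hf
    obtain ⟨f', hf', hsub, hset⟩ := ih _ _ (mem_image_of_mem (riseStep S a) hf)
    refine ⟨f', hf', (subset_riseStep S a f).trans hsub, fun x hx => ?_⟩
    rcases hset x hx with hx' | hx'
    · rcases mem_insert.1 (riseStep_subset S a f hx') with rfl | h
      · exact Or.inr (List.mem_cons_self)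
      · exact Or.inl h
    · exact Or.inr (List.mem_cons_of_mem _ hx')

lemma lemD (u : List α) : ∀ (S : Finset (Finset α)) (z t : Finset α), UnionClosed S →
    z ∈ S → z ⊆ t → (∀ f ∈ S, f ⊆ t → f ⊆ z) → (∀ b ∈ u, b ∈ t) →
    riseWord S u z = z ∪ u.toFinset := by
  induction u with
  | nil => intro S z t _ _ _ _ _; simp [riseWord]
  | cons a u ih =>
    intro S z t hS hz hzt hmax hu
    have hat : a ∈ t := hu a (List.mem_cons_self)
    have hstep : riseStep S a z = insert a z := by
      unfold riseStep
      split
      · next h =>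
        have hsub : insert a z ⊆ z := hmax _ h (insert_subset hat hzt)
        exact Subset.antisymm (subset_insert _ _) hsub
      · rfl
    have hrw : riseWord S (a :: u) z = riseWord (S.image (riseStep S a)) u (riseStep S a z) :=
      rfl
    have hmax' : ∀ f' ∈ S.image (riseStep S a), f' ⊆ t → f' ⊆ insert a z := by
      intro f' hf' hf't
      obtain ⟨f, hf, rfl⟩ := mem_image.1 hf'
      have hft : f ⊆ t := (subset_riseStep S a f).trans hf't
      have : f ⊆ z := hmax f hf hft
      exact (riseStep_subset S a f).trans (insert_subset_insert _ this)
    have := ih (S.image (riseStep S a)) (insert a z) t (unionClosed_image hS a)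
      (by rw [← hstep]; exact mem_image_of_mem _ hz)
      (insert_subset hat hzt) hmax' (fun b hb => hu b (List.mem_cons_of_mem _ hb))
    rw [hrw, hstep, this]
    ext x
    simp only [List.toFinset_cons, mem_union, mem_insert, List.mem_toFinset]
    tauto

lemma lemG (u : List α) : ∀ (S : Finset (Finset α)), UnionClosed S →
    ∀ (η : Finset α), (∀ x ∈ u, insert x η ∈ S) → riseWord S u η = η := by
  induction u with
  | nil => intro S _ η _; rfl
  | cons a u ih =>
    intro S hS η hins
    have ha := hins a (List.mem_cons_self)
    have hstep : riseStep S a η = η := if_pos ha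
    have hrw : riseWord S (a :: u) η = riseWord (S.image (riseStep S a)) u (riseStep S a η) :=
      rfl
    rw [hrw, hstep]
    apply ih _ (unionClosed_image hS a)
    intro x hx
    have hxin := hins x (List.mem_cons_of_mem _ hx)
    have : insert a (insert x η) ∈ S := by
      have := hS _ ha _ hxin
      have heq : insert a η ∪ insert x η = insert a (insert x η) := by
        ext y; simp; tauto
      rwa [heq] at this
    exact mem_image.2 ⟨insert x η, hxin, if_pos this⟩

lemma exists_perm_map [Fintype α] (w L : List α) (hndw : w.Nodup) (hallw : ∀ x, x ∈ w)
    (hndL : L.Nodup) (hallL : ∀ x, x ∈ L) : ∃ θ : Equiv.Perm α, w.map θ = L := by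
  have hlen : w.length = L.length := by
    have h1 : w.toFinset = univ := Finset.eq_univ_iff_forall.2 fun x => List.mem_toFinset.2 (hallw x)
    have h2 : L.toFinset = univ := Finset.eq_univ_iff_forall.2 fun x => List.mem_toFinset.2 (hallL x)
    rw [← List.toFinset_card_of_nodup hndw, ← List.toFinset_card_of_nodup hndL, h1, h2]
  refine ⟨(List.Nodup.getEquivOfForallMemList w hndw hallw).symm.trans
    ((finCongr hlen).trans (List.Nodup.getEquivOfForallMemList L hndL hallL)), ?_⟩
  apply List.ext_get
  · simp [hlen]
  · intro i h1 h2
    have h1' : i < w.length := by simpa using h1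
    rw [show ∀ (f : α → α) (h : i < (w.map f).length),
      (w.map f).get ⟨i, h⟩ = f (w.get ⟨i, h1'⟩) from fun f h => by simp]
    simp only [Equiv.trans_apply]
    have hsymm : (List.Nodup.getEquivOfForallMemList w hndw hallw).symm
        (w.get ⟨i, h1'⟩) = ⟨i, h1'⟩ := by
      apply Equiv.symm_apply_eq .. |>.2
      simp [List.Nodup.getEquivOfForallMemList]
    rw [hsymm]
    simp [List.Nodup.getEquivOfForallMemList, finCongr_apply]

lemma mem_FibS_max {F : Finset (Finset α)} (hF : UnionClosed F) {g : Finset α} (hg : g ∈ F)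
    {η : Finset α} (hη : η ∈ FibS F g) : g ⊆ η ∧ ∀ f ∈ F, f ⊆ η → f ⊆ g := by
  obtain ⟨-, hstar⟩ := hη
  have hsup : starOp F η ⊆ η := by
    show (F.filter fun f => f ⊆ η).sup id ≤ η
    apply Finset.sup_le
    intro f hf
    exact (mem_filter.1 hf).2
  constructor
  · rw [← hstar]; exact hsup
  · intro f hf hsub
    rw [← hstar]
    have : id f ≤ (F.filter fun f => f ⊆ η).sup id :=
      Finset.le_sup (mem_filter.2 ⟨hf, hsub⟩)
    exact this

end AuxLemmas

/-- Theorem 4.3: the orbit { φ_{wθ}(g) : θ ∈ 𝔖_X } equals the set of maximal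
elements of the fiber Fib(g). -/
theorem stmt_8 {α : Type*} [DecidableEq α] [Fintype α]
    (F : Finset (Finset α)) (hF : UnionClosed F)
    (w : List α) (hnd : w.Nodup) (hall : ∀ x : α, x ∈ w)
    (g : Finset α) (hg : g ∈ F) :
    {η : Finset α | ∃ θ : Equiv.Perm α, riseWord F (w.map θ) g = η} =
    {η : Finset α | η ∈ FibS F g ∧ ∀ η' ∈ FibS F g, η ⊆ η' → η' = η} := by
  have hstarg : ∀ {h : Finset α}, g ⊆ h → g ⊆ starOp F h := by
    intro h hgh
    have : id g ≤ (F.filter fun f => f ⊆ h).sup id :=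
      Finset.le_sup (mem_filter.2 ⟨hg, hgh⟩)
    exact this
  have hstarle : ∀ {h : Finset α}, (∀ f ∈ F, f ⊆ h → f ⊆ g) → starOp F h ⊆ g := by
    intro h hyp
    show (F.filter fun f => f ⊆ h).sup id ≤ g
    apply Finset.sup_le
    intro f hf
    obtain ⟨hfF, hfh⟩ := mem_filter.1 hf
    exact hyp f hfF hfh
  ext η
  simp only [Set.mem_setOf_eq]
  constructor
  · rintro ⟨θ, rfl⟩
    set u := w.map θ with hu
    have und : u.Nodup := hnd.map θ.injective
    have uall : ∀ x : α, x ∈ u := fun x => by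
      rw [hu]
      exact List.mem_map.2 ⟨θ.symm x, hall _, θ.apply_symm_apply x⟩
    set η := riseWord F u g with hηdef
    have hgη : g ⊆ η := subset_riseWord u F g
    have hAll : ∀ f ∈ F, f ⊆ η → f ⊆ g := fun f hf hsub => lemA u F hF g hg f hf hsub
    have hFib : η ∈ FibS F g := by
      refine ⟨?_, ?_⟩
      · obtain ⟨m, hm, hmg⟩ := exists_mins F g.card g le_rfl hg
        exact ⟨m, hm, hmg.trans hgη⟩
      · exact Subset.antisymm (hstarle hAll) (hstarg hgη)
    refine ⟨hFib, ?_⟩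
    intro η' hη' hsub
    obtain ⟨hgη', hAll'⟩ := mem_FibS_max hF hg hη'
    apply Subset.antisymm _ hsub
    intro x hxη'
    by_contra hxη
    obtain ⟨f, hf, hxf, hfsub⟩ := lemB u F g hg x (uall x) hxη
    have hfη' : f ⊆ η' := hfsub.trans (insert_subset hxη' hsub)
    exact hxη (hgη (hAll' f hf hfη' hxf))
  · rintro ⟨hFib, hmax⟩
    obtain ⟨hgη, hAll⟩ := mem_FibS_max hF hg hFib
    -- each x outside η has a witness
    have hwit : ∀ x ∉ η, ∃ f ∈ F, x ∈ f ∧ f ⊆ insert x η := by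
      intro x hx
      have hne : starOp F (insert x η) ≠ g := by
        intro heq
        have : insert x η ∈ FibS F g := by
          refine ⟨?_, heq⟩
          obtain ⟨m, hm, hmg⟩ := hFib.1
          exact ⟨m, hm, hmg.trans (subset_insert _ _)⟩
        have := hmax _ this (subset_insert _ _)
        exact hx (this ▸ mem_insert_self x η)
      have : ¬ (∀ f ∈ F, f ⊆ insert x η → f ⊆ g) := by
        intro hyp
        exact hne (Subset.antisymm (hstarle hyp) (hstarg (hgη.trans (subset_insert _ _))))
      push_neg at this
      obtain ⟨f, hfF, hfsub, hfg⟩ := this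
      refine ⟨f, hfF, ?_, hfsub⟩
      by_contra hxf
      have : f ⊆ η := fun y hy => by
        rcases mem_insert.1 (hfsub hy) with rfl | h
        · exact absurd hy hxf
        · exact h
      exact hfg (hAll f hfF this)
    -- the word: letters of η first, then the rest
    set L : List α := η.toList ++ ηᶜ.toList with hL
    have hLnd : L.Nodup := by
      refine List.Nodup.append (nodup_toList η) (nodup_toList ηᶜ) ?_
      intro x hx hx'
      rw [Finset.mem_toList] at hx hx'
      exact (mem_compl.1 hx') hx
    have hLall : ∀ x : α, x ∈ L := by
      intro x
      rw [hL, List.mem_append, Finset.mem_toList, Finset.mem_toList, mem_compl]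
      exact (em (x ∈ η)).imp id id
    -- phase 1
    have hphase1 : riseWord F η.toList g = η := by
      rw [lemD η.toList F g η hF hg hgη hAll (fun b hb => Finset.mem_toList.1 hb)]
      rw [Finset.toList_toFinset]
      exact union_eq_right.2 hgη
    set S1 := riseSections F η.toList with hS1def
    have hS1 : UnionClosed S1 := unionClosed_sections η.toList F hF
    have hηS1 : η ∈ S1 := hphase1 ▸ riseWord_mem_sections η.toList F g hg
    -- phase 2 hypothesis
    have hins : ∀ x ∈ ηᶜ.toList, insert x η ∈ S1 := by
      intro x hx
      have hxη : x ∉ η := mem_compl.1 (Finset.mem_toList.1 hx)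
      obtain ⟨f, hfF, hxf, hfsub⟩ := hwit x hxη
      have hkF : f ∪ g ∈ F := hF f hfF g hg
      obtain ⟨f', hf'S1, hkf', hf'mem⟩ := lemTrack η.toList F (f ∪ g) hkF
      have hf'sub : f' ⊆ insert x η := by
        intro y hy
        rcases hf'mem y hy with h | h
        · rcases mem_union.1 h with h | h
          · exact hfsub h
          · exact mem_insert_of_mem (hgη h)
        · exact mem_insert_of_mem (Finset.mem_toList.1 h)
      have : f' ∪ η = insert x η := by
        apply Subset.antisymm (union_subset hf'sub (subset_insert _ _))
        intro y hy
        rcases mem_insert.1 hy with rfl | h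
        · exact mem_union_left _ (hkf' (mem_union_left _ hxf))
        · exact mem_union_right _ h
      exact this ▸ hS1 f' hf'S1 η hηS1
    have hrun : riseWord F L g = η := by
      rw [hL, riseWord_append, hphase1, ← hS1def]
      exact lemG ηᶜ.toList S1 hS1 η hins
    -- build the permutation
    obtain ⟨θ, hθ⟩ := exists_perm_map w L hnd hall hLnd hLall
    exact ⟨θ, hθ ▸ hrun⟩
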